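/- If B is a λ-doubly stochastic irreducible nonnegative real matrix, then there exists a polynomial p with real coefficients such that p(B) = J. -/

import Mathlib

open Polynomial Matrix

/-- A nonnegative matrix is irreducible iff its underlying digraph is strongly connected. -/
def MatIrreducible {V : Type*} [Fintype V] [DecidableEq V] (B : Matrix V V ℝ) : Prop :=
  ∀ x y : V, ∃ ℓ : ℕ, 0 < ℓ ∧ (B ^ ℓ) x y ≠ 0

lemma eval_charpoly_aux {n : Type*} [Fintype n] [DecidableEq n] (M : Matrix n n ℝ) (t : ℝ) :
    M.charpoly.eval t = (t • (1 : Matrix n n ℝ) - M).det := by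
  rw [Matrix.charpoly, ← Polynomial.coe_evalRingHom, RingHom.map_det]
  congr 1
  ext i j
  by_cases h : i = j <;>
    simp [charmatrix_apply, h, Matrix.one_apply, Matrix.smul_apply, Matrix.diagonal_apply]

theorem stmt2 {V : Type*} [Fintype V] [DecidableEq V] [Nonempty V]
    (B : Matrix V V ℝ) (lam : ℝ) (hpos : 0 < lam)
    (hnn : ∀ x y, 0 ≤ B x y)
    (hrow : ∀ x, ∑ y, B x y = lam) (hcol : ∀ y, ∑ x, B x y = lam)
    (hirr : MatIrreducible B) :
    ∃ p : Polynomial ℝ, aeval B p = Matrix.of (fun _ _ => (1 : ℝ)) := by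
  classical
  set n : ℝ := (Fintype.card V : ℝ) with hn_def
  have hn0 : 0 < n := by
    simpa [hn_def] using (Nat.cast_pos.mpr (Fintype.card_pos (α := V)) : (0 : ℝ) < Fintype.card V)
  have hn : n ≠ 0 := ne_of_gt hn0
  set Jm : Matrix V V ℝ := Matrix.of (fun _ _ => (1 : ℝ)) with hJ_def
  set Cm : Matrix V V ℝ := B - (lam / n) • Jm with hC_def
  -- basic multiplication facts
  have hJJ : Jm * Jm = n • Jm := by
    ext i j; simp [hJ_def, Matrix.mul_apply, hn_def]
  have hBJ : B * Jm = lam • Jm := by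
    ext i j; simp [hJ_def, Matrix.mul_apply, hrow]
  have hJB : Jm * B = lam • Jm := by
    ext i j; simp [hJ_def, Matrix.mul_apply, hcol]
  have hCJ : Cm * Jm = 0 := by
    rw [hC_def, Matrix.sub_mul, hBJ, Matrix.smul_mul, hJJ, smul_smul,
      div_mul_cancel₀ _ hn, sub_self]
  have hJC : Jm * Cm = 0 := by
    rw [hC_def, Matrix.mul_sub, hJB, Matrix.mul_smul, hJJ, smul_smul,
      div_mul_cancel₀ _ hn, sub_self]
  -- powers of B
  have powB : ∀ k : ℕ, B ^ (k + 1) = Cm ^ (k + 1) + (lam ^ (k + 1) / n) • Jm := by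
    intro k
    induction k with
    | zero => simp only [zero_add, pow_one, hC_def]; abel
    | succ k ih =>
      have hBdecomp : B = Cm + (lam / n) • Jm := by rw [hC_def]; abel
      have hJCp : Jm * Cm ^ (k + 1) = 0 := by
        rw [pow_succ', ← Matrix.mul_assoc, hJC, Matrix.zero_mul]
      have hB' : B * Cm ^ (k + 1) = Cm ^ (k + 2) := by
        rw [hBdecomp, Matrix.add_mul, Matrix.smul_mul, hJCp, smul_zero, add_zero, ← pow_succ']
      calc B ^ (k + 2) = B * B ^ (k + 1) := pow_succ' B (k + 1)
        _ = B * Cm ^ (k + 1) + (lam ^ (k + 1) / n) • (B * Jm) := by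
            rw [ih, Matrix.mul_add, Matrix.mul_smul]
        _ = Cm ^ (k + 2) + (lam ^ (k + 2) / n) • Jm := by
            rw [hB', hBJ, smul_smul]
            congr 1
            congr 1
            ring
  -- nonnegativity and row sums of powers
  have hpow_nn : ∀ (ℓ : ℕ) (i j : V), 0 ≤ (B ^ ℓ) i j := by
    intro ℓ
    induction ℓ with
    | zero => intro i j; by_cases h : i = j <;> simp [Matrix.one_apply, h]
    | succ ℓ ih =>
      intro i j
      rw [pow_succ, Matrix.mul_apply]
      exact Finset.sum_nonneg fun k _ => mul_nonneg (ih i k) (hnn k j)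
  have hpow_row : ∀ (ℓ : ℕ) (i : V), ∑ j, (B ^ ℓ) i j = lam ^ ℓ := by
    intro ℓ
    induction ℓ with
    | zero => intro i; simp [Matrix.one_apply]
    | succ ℓ ih =>
      intro i
      simp only [pow_succ, Matrix.mul_apply]
      rw [Finset.sum_comm]
      calc ∑ k, ∑ j, (B ^ ℓ) i k * B k j
          = ∑ k, (B ^ ℓ) i k * lam := by
            refine Finset.sum_congr rfl fun k _ => ?_
            rw [← Finset.mul_sum, hrow]
        _ = lam ^ ℓ * lam := by rw [← Finset.sum_mul, ih]
  -- eigenvectors of B for lam are constant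
  have heig : ∀ x : V → ℝ, B *ᵥ x = lam • x → ∀ i j : V, x i = x j := by
    intro x hx
    have hpowx : ∀ ℓ : ℕ, (B ^ ℓ) *ᵥ x = (lam ^ ℓ) • x := by
      intro ℓ
      induction ℓ with
      | zero => simp
      | succ ℓ ih =>
        rw [pow_succ', ← Matrix.mulVec_mulVec, ih, Matrix.mulVec_smul, hx, smul_smul,
          ← pow_succ]
    obtain ⟨i₀, hmax⟩ := Finite.exists_max x
    suffices h : ∀ j, x j = x i₀ by intro i j; rw [h i, h j]
    intro j
    obtain ⟨ℓ, hℓ, hBl⟩ := hirr i₀ j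
    have hsum : ∑ k, (B ^ ℓ) i₀ k * (x i₀ - x k) = 0 := by
      have h1 : ∑ k, (B ^ ℓ) i₀ k * x k = lam ^ ℓ * x i₀ := by
        have := congrFun (hpowx ℓ) i₀
        simpa [Matrix.mulVec, dotProduct] using this
      simp only [mul_sub]
      rw [Finset.sum_sub_distrib, ← Finset.sum_mul, hpow_row, h1, sub_self]
    have hterm : ∀ k ∈ Finset.univ, 0 ≤ (B ^ ℓ) i₀ k * (x i₀ - x k) := fun k _ =>
      mul_nonneg (hpow_nn ℓ i₀ k) (sub_nonneg.mpr (hmax k))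
    have := (Finset.sum_eq_zero_iff_of_nonneg hterm).mp hsum j (Finset.mem_univ j)
    rcases mul_eq_zero.mp this with h | h
    · exact absurd h hBl
    · linarith [sub_eq_zero.mp h]
  -- lam is not an eigenvalue of Cm
  have hker : ∀ v : V → ℝ, Cm *ᵥ v = lam • v → v = 0 := by
    intro v hv
    have hJv : Jm *ᵥ v = (∑ i, v i) • (fun _ => (1 : ℝ)) := by
      ext i; simp [hJ_def, Matrix.mulVec, dotProduct]
    have hBsum : ∑ i, (B *ᵥ v) i = lam * ∑ i, v i := by
      simp only [Matrix.mulVec, dotProduct]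
      rw [Finset.sum_comm]
      calc ∑ j, ∑ i, B i j * v j = ∑ j, lam * v j := by
            refine Finset.sum_congr rfl fun j _ => ?_
            rw [← Finset.sum_mul, hcol]
        _ = lam * ∑ j, v j := by rw [Finset.mul_sum]
    have hCsum : ∑ i, (Cm *ᵥ v) i = 0 := by
      rw [hC_def]
      simp only [Matrix.sub_mulVec, Matrix.smul_mulVec, Pi.sub_apply, Pi.smul_apply,
        smul_eq_mul]
      rw [Finset.sum_sub_distrib, hBsum]
      rw [hJv]
      simp only [Pi.smul_apply, smul_eq_mul, mul_one]
      rw [← Finset.mul_sum, Finset.sum_const, Finset.card_univ, nsmul_eq_mul]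
      field_simp
      ring
    have hvsum : ∑ i, v i = 0 := by
      have : ∑ i, (Cm *ᵥ v) i = lam * ∑ i, v i := by
        rw [hv]; simp [Finset.mul_sum]
      rw [hCsum] at this
      have := this.symm
      rcases mul_eq_zero.mp this with h | h
      · exact absurd h (ne_of_gt hpos)
      · exact h
    have hJv0 : Jm *ᵥ v = 0 := by rw [hJv, hvsum, zero_smul]
    have hBv : B *ᵥ v = lam • v := by
      have := hv
      rw [hC_def, Matrix.sub_mulVec, Matrix.smul_mulVec, hJv0, smul_zero, sub_zero] at this
      exact this
    have hconst := heig v hBv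
    have : ∀ i, v i = 0 := by
      intro i
      have hs : ∑ j, v j = (Fintype.card V : ℝ) * v i := by
        rw [Finset.sum_congr rfl fun j _ => hconst j i]
        simp [Finset.sum_const, Finset.card_univ, nsmul_eq_mul]
      rw [hvsum] at hs
      have := hs.symm
      rcases mul_eq_zero.mp this with h | h
      · exact absurd h (by rw [← hn_def]; exact hn)
      · exact h
    funext i; exact this i
  -- the characteristic polynomial of Cm
  set f : Polynomial ℝ := Cm.charpoly with hf_def
  have hfl : f.eval lam ≠ 0 := by
    rw [hf_def, eval_charpoly_aux]
    intro hdet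
    obtain ⟨v, hv0, hv⟩ := Matrix.exists_mulVec_eq_zero_iff.mpr hdet
    apply hv0
    apply hker
    rw [Matrix.sub_mulVec, Matrix.smul_mulVec, Matrix.one_mulVec, sub_eq_zero] at hv
    exact hv.symm
  have hf0 : f.coeff 0 = 0 := by
    have hdetC : Cm.det = 0 := by
      apply Matrix.exists_mulVec_eq_zero_iff.mp
      refine ⟨fun _ => (1 : ℝ), ?_, ?_⟩
      · intro h
        have := congrFun h (Classical.arbitrary V)
        simp at this
      · rw [hC_def, Matrix.sub_mulVec, Matrix.smul_mulVec]
        have h1 : B *ᵥ (fun _ => (1 : ℝ)) = fun _ => lam := by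
          ext i; simp [Matrix.mulVec, dotProduct, hrow]
        have h2 : Jm *ᵥ (fun _ => (1 : ℝ)) = fun _ => n := by
          ext i; simp [hJ_def, Matrix.mulVec, dotProduct, hn_def]
        rw [h1, h2]
        ext i
        simp [div_mul_cancel₀ _ hn]
    have : f.eval 0 = 0 := by
      rw [hf_def, eval_charpoly_aux, zero_smul, zero_sub, Matrix.det_neg, hdetC, mul_zero]
    simpa [Polynomial.eval_zero, Polynomial.coeff_zero_eq_eval_zero] using this
  -- aeval computations
  have haevalC : aeval Cm f = 0 := by rw [hf_def]; exact Matrix.aeval_self_charpoly Cm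
  have key : aeval B f = (f.eval lam / n) • Jm := by
    rw [Polynomial.aeval_eq_sum_range (p := f) B]
    have step : ∀ i ∈ Finset.range (f.natDegree + 1),
        f.coeff i • B ^ i = f.coeff i • Cm ^ i + (f.coeff i * lam ^ i / n) • Jm := by
      intro i _
      match i with
      | 0 => simp [hf0]
      | (k + 1) =>
        rw [powB k, smul_add, smul_smul, mul_div_assoc]
    rw [Finset.sum_congr rfl step, Finset.sum_add_distrib]
    have h1 : ∑ i ∈ Finset.range (f.natDegree + 1), f.coeff i • Cm ^ i = 0 := by
      rw [← Polynomial.aeval_eq_sum_range (p := f) Cm, haevalC]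
    rw [h1, zero_add]
    have h2 : ∑ i ∈ Finset.range (f.natDegree + 1), (f.coeff i * lam ^ i / n) • Jm
        = ((∑ i ∈ Finset.range (f.natDegree + 1), f.coeff i * lam ^ i) / n) • Jm := by
      rw [Finset.sum_div, ← Finset.sum_smul]
    rw [h2, ← Polynomial.eval_eq_sum_range]
  refine ⟨Polynomial.C (n / f.eval lam) * f, ?_⟩
  rw [_root_.map_mul, Polynomial.aeval_C, key]
  rw [Algebra.algebraMap_eq_smul_one]
  rw [smul_mul_assoc, Matrix.one_mul, smul_smul]
  rw [show n / f.eval lam * (f.eval lam / n) = 1 by field_simp]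
  rw [one_smul, hJ_def]
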